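/- Let b1, b2, c, δ > 0 and θ > 1. Then there exist constants l0 > 0 and k > 0 such that for all real numbers x > y ≥ 0 with x − y > l0, one has (b1 x − b2 exp(c x^δ)) − (b1 y − b2 exp(c y^δ)) ≤ −k (x − y)^θ. -/

import Mathlib

open Set Filter MeasureTheory
open scoped Nat

private lemma aux_exp_poly (β C δ p : ℝ) (hβ : 0 < β) (hC : 0 < C) (hδ : 0 < δ) :
    ∃ l0, 1 ≤ l0 ∧ ∀ L : ℝ, l0 ≤ L → C * L ^ p ≤ Real.exp (β * L ^ δ) := by
  obtain ⟨n, hn⟩ : ∃ n : ℕ, p + 1 ≤ n * δ := by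
    obtain ⟨n, hn⟩ := exists_nat_ge ((p + 1) / δ)
    refine ⟨n, ?_⟩
    have := (div_le_iff₀ hδ).mp hn
    linarith
  refine ⟨max 1 (C * n ! / β ^ n), le_max_left _ _, fun L hL => ?_⟩
  have hL1 : (1:ℝ) ≤ L := le_trans (le_max_left _ _) hL
  have hL0 : (0:ℝ) < L := lt_of_lt_of_le one_pos hL1
  have hβn : (0:ℝ) < β ^ n := pow_pos hβ n
  have hfac : (0:ℝ) < n ! := by positivity
  have h1 : (β * L ^ δ) ^ n / n ! ≤ Real.exp (β * L ^ δ) :=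
    Real.pow_div_factorial_le_exp _ (by positivity) n
  refine le_trans ?_ h1
  have h2 : (β * L ^ δ) ^ n = β ^ n * L ^ (δ * n) := by
    rw [mul_pow, ← Real.rpow_natCast (L ^ δ) n, ← Real.rpow_mul hL0.le]
  rw [h2]
  have h3 : L ^ (p + 1) ≤ L ^ (δ * n) :=
    Real.rpow_le_rpow_of_exponent_le hL1 (by rw [mul_comm]; exact hn)
  have h4 : L ^ (p + 1) = L ^ p * L := by
    rw [Real.rpow_add hL0, Real.rpow_one]
  have h5 : C * n ! / β ^ n ≤ L := le_trans (le_max_right _ _) hL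
  have hLp : (0:ℝ) < L ^ p := Real.rpow_pos_of_pos hL0 p
  have key : C * L ^ p ≤ β ^ n * (L ^ p * L) / n ! := by
    rw [le_div_iff₀ hfac]
    have h6 : (β ^ n * L ^ p) * (C * n ! / β ^ n) ≤ (β ^ n * L ^ p) * L :=
      mul_le_mul_of_nonneg_left h5 (by positivity)
    calc C * L ^ p * n ! = (β ^ n * L ^ p) * (C * n ! / β ^ n) := by field_simp
      _ ≤ (β ^ n * L ^ p) * L := h6
      _ = β ^ n * (L ^ p * L) := by ring
  calc C * L ^ p ≤ β ^ n * (L ^ p * L) / n ! := key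
    _ ≤ β ^ n * L ^ (δ * n) / n ! := by
        rw [← h4]
        gcongr
    _ = β ^ n * L ^ (δ * n) / n ! := rfl

private lemma aux_exp_sub_exp {a b : ℝ} (hb : 0 ≤ b) (hab : b ≤ a) :
    (a - b) / 2 * Real.exp (a / 2) ≤ Real.exp a - Real.exp b := by
  set t := (a - b) / 2 with ht
  have ht0 : 0 ≤ t := by rw [ht]; linarith
  have e1 : Real.exp a = Real.exp ((a + b) / 2) * Real.exp t := by
    rw [← Real.exp_add, ht]; congr 1; ring
  have e2 : Real.exp b = Real.exp ((a + b) / 2) * Real.exp (-t) := by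
    rw [← Real.exp_add, ht]; congr 1; ring
  have h1 : t + 1 ≤ Real.exp t := Real.add_one_le_exp t
  have h2 : Real.exp (-t) ≤ 1 := Real.exp_le_one_iff.mpr (by linarith)
  have h3 : Real.exp (a / 2) ≤ Real.exp ((a + b) / 2) :=
    Real.exp_le_exp.mpr (by linarith)
  have hpos : 0 < Real.exp ((a + b) / 2) := Real.exp_pos _
  calc t * Real.exp (a / 2) ≤ t * Real.exp ((a + b) / 2) :=
        mul_le_mul_of_nonneg_left h3 ht0
    _ ≤ Real.exp ((a + b) / 2) * (Real.exp t - Real.exp (-t)) := by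
        rw [mul_comm]; exact mul_le_mul_of_nonneg_left (by linarith) hpos.le
    _ = Real.exp a - Real.exp b := by rw [e1, e2]; ring

private lemma aux_rpow_concave {x y δ : ℝ} (hy : 0 ≤ y) (hxy : y < x) (hδ : 0 < δ)
    (hδ1 : δ ≤ 1) : δ * (x ^ (δ - 1) * (x - y)) ≤ x ^ δ - y ^ δ := by
  have hx : 0 < x := lt_of_le_of_lt hy hxy
  have ht0 : 0 ≤ y / x := by positivity
  have amgm : (y / x) ^ δ * 1 ^ (1 - δ) ≤ δ * (y / x) + (1 - δ) * 1 :=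
    Real.geom_mean_le_arith_mean2_weighted hδ.le (by linarith) ht0 zero_le_one (by ring)
  rw [Real.one_rpow, mul_one, mul_one] at amgm
  have hdiv : (y / x) ^ δ = y ^ δ / x ^ δ := Real.div_rpow hy hx.le δ
  rw [hdiv] at amgm
  have hxδ : 0 < x ^ δ := Real.rpow_pos_of_pos hx δ
  have h1 : y ^ δ ≤ (δ * (y / x) + (1 - δ)) * x ^ δ := by
    rw [← div_le_iff₀ hxδ]; exact amgm
  have h2 : x ^ (δ - 1) = x ^ δ / x := by
    rw [Real.rpow_sub hx, Real.rpow_one]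
  rw [h2]
  have h0 : δ * (x ^ δ / x * (x - y)) = (δ * ((x - y) / x)) * x ^ δ := by ring
  rw [h0]
  have h3 : (δ * ((x - y) / x)) * x ^ δ + (δ * (y / x) + (1 - δ)) * x ^ δ = x ^ δ := by
    field_simp
    ring
  linarith

private lemma aux_rpow_superadd {a b δ : ℝ} (ha : 0 ≤ a) (hb : 0 ≤ b) (hδ : 1 ≤ δ) :
    a ^ δ + b ^ δ ≤ (a + b) ^ δ := by
  have h := NNReal.coe_le_coe.2
    (NNReal.add_rpow_le_rpow_add (⟨a, ha⟩ : NNReal) (⟨b, hb⟩ : NNReal) hδ)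
  simp only [NNReal.coe_add, NNReal.coe_rpow, NNReal.coe_mk] at h
  exact h

private lemma aux_key (b1 b2 c δ θ : ℝ) (hb1 : 0 < b1) (hb2 : 0 < b2) (hc : 0 < c)
    (hδ : 0 < δ) (hθ : 1 < θ) :
    ∃ l0, 1 ≤ l0 ∧ ∀ x y : ℝ, 0 ≤ y → y < x → l0 < x - y →
      b1 * (x - y) + (x - y) ^ θ ≤ b2 * (Real.exp (c * x ^ δ) - Real.exp (c * y ^ δ)) := by
  rcases le_or_gt δ 1 with hδ1 | hδ1
  · -- δ ≤ 1
    obtain ⟨l0a, hl0a1, hl0a⟩ := aux_exp_poly (c / 4) 1 δ (1 - δ) (by linarith) one_pos hδ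
    obtain ⟨l0b, hl0b1, hl0b⟩ := aux_exp_poly (c / 4) (2 * (b1 + 1) / (b2 * c * δ)) δ (θ - 1)
      (by linarith) (by positivity) hδ
    refine ⟨max l0a l0b, le_trans hl0a1 (le_max_left _ _), fun x y hy hxy hL => ?_⟩
    set L := x - y with hLdef
    have hL1 : (1:ℝ) ≤ L := le_trans (le_trans hl0a1 (le_max_left _ _)) hL.le
    have hL0 : (0:ℝ) < L := lt_of_lt_of_le one_pos hL1
    have hx0 : 0 < x := lt_of_le_of_lt hy hxy
    have hxL : L ≤ x := by rw [hLdef]; linarith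
    have hxla : l0a ≤ x := le_trans (le_trans (le_max_left _ _) hL.le) hxL
    have hLlb : l0b ≤ L := le_trans (le_max_right _ _) hL.le
    have hrmono : y ^ δ ≤ x ^ δ := Real.rpow_le_rpow hy hxy.le hδ.le
    have hmono : c * y ^ δ ≤ c * x ^ δ := mul_le_mul_of_nonneg_left hrmono hc.le
    have hyδ0 : 0 ≤ c * y ^ δ := by positivity
    have step1 : (c * x ^ δ - c * y ^ δ) / 2 * Real.exp (c * x ^ δ / 2)
        ≤ Real.exp (c * x ^ δ) - Real.exp (c * y ^ δ) := aux_exp_sub_exp hyδ0 hmono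
    have step2 : δ * (x ^ (δ - 1) * L) ≤ x ^ δ - y ^ δ := aux_rpow_concave hy hxy hδ hδ1
    have hxpow : x ^ (1 - δ) ≤ Real.exp (c / 4 * x ^ δ) := by
      have := hl0a x hxla; linarith
    have hxinv : x ^ (δ - 1) = (x ^ (1 - δ))⁻¹ := by
      rw [← Real.rpow_neg hx0.le]; norm_num
    have hx1δpos : 0 < x ^ (1 - δ) := Real.rpow_pos_of_pos hx0 _
    have hhalf : Real.exp (c * x ^ δ / 2) =
        Real.exp (c / 4 * x ^ δ) * Real.exp (c / 4 * x ^ δ) := by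
      rw [← Real.exp_add]; ring_nf
    have hgeo1 : 1 ≤ x ^ (δ - 1) * Real.exp (c / 4 * x ^ δ) := by
      rw [hxinv, ← div_eq_inv_mul, le_div_iff₀ hx1δpos, one_mul]
      exact hxpow
    have hLx : L ^ δ ≤ x ^ δ := Real.rpow_le_rpow hL0.le hxL hδ.le
    have hexpL : Real.exp (c / 4 * L ^ δ) ≤ Real.exp (c / 4 * x ^ δ) :=
      Real.exp_le_exp.mpr (mul_le_mul_of_nonneg_left hLx (by positivity))
    have hpolyL : 2 * (b1 + 1) / (b2 * c * δ) * L ^ (θ - 1) ≤ Real.exp (c / 4 * L ^ δ) :=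
      hl0b L hLlb
    have hLθ : L ^ θ = L * L ^ (θ - 1) := by
      rw [show θ = 1 + (θ - 1) by ring, Real.rpow_add hL0, Real.rpow_one]
      ring_nf
    have hLθ1pos : 0 < L ^ (θ - 1) := Real.rpow_pos_of_pos hL0 _
    have hLge : L ≤ L ^ θ := by
      nth_rewrite 1 [← Real.rpow_one L]
      exact Real.rpow_le_rpow_of_exponent_le hL1 (by linarith)
    set E := Real.exp (c / 4 * x ^ δ) with hE
    have e1 : 0 < E := Real.exp_pos _
    have main : (b1 + 1) * L ^ θ ≤ b2 * (Real.exp (c * x ^ δ) - Real.exp (c * y ^ δ)) := by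
      have c1 : b2 * ((c * x ^ δ - c * y ^ δ) / 2 * Real.exp (c * x ^ δ / 2))
          ≤ b2 * (Real.exp (c * x ^ δ) - Real.exp (c * y ^ δ)) :=
        mul_le_mul_of_nonneg_left step1 hb2.le
      refine le_trans ?_ c1
      rw [hhalf]
      have t1 : δ * (x ^ (δ - 1) * L) * E ≤ (x ^ δ - y ^ δ) * E :=
        mul_le_mul_of_nonneg_right step2 e1.le
      have t2 : δ * L ≤ δ * (x ^ (δ - 1) * L) * E := by
        have h6 := mul_le_mul_of_nonneg_left hgeo1 (by positivity : (0:ℝ) ≤ δ * L)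
        calc δ * L = δ * L * 1 := by ring
          _ ≤ δ * L * (x ^ (δ - 1) * E) := h6
          _ = δ * (x ^ (δ - 1) * L) * E := by ring
      have t3 : δ * L * E ≤ (x ^ δ - y ^ δ) * E * E := by
        calc δ * L * E ≤ δ * (x ^ (δ - 1) * L) * E * E :=
              mul_le_mul_of_nonneg_right t2 e1.le
          _ ≤ (x ^ δ - y ^ δ) * E * E := mul_le_mul_of_nonneg_right t1 e1.le
      have c2 : b2 * (c * δ / 2) * L * E
          ≤ b2 * ((c * x ^ δ - c * y ^ δ) / 2 * (E * E)) := by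
        calc b2 * (c * δ / 2) * L * E = (b2 * c / 2) * (δ * L * E) := by ring
          _ ≤ (b2 * c / 2) * ((x ^ δ - y ^ δ) * E * E) :=
              mul_le_mul_of_nonneg_left t3 (by positivity)
          _ = b2 * ((c * x ^ δ - c * y ^ δ) / 2 * (E * E)) := by ring
      refine le_trans ?_ c2
      have c3 : (b1 + 1) * L ^ (θ - 1) ≤ b2 * (c * δ / 2) * E := by
        have h7 : 0 < b2 * c * δ := by positivity
        have h8 := le_trans hpolyL hexpL
        rw [div_mul_eq_mul_div, div_le_iff₀ h7] at h8
        linarith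
      calc (b1 + 1) * L ^ θ = (b1 + 1) * L ^ (θ - 1) * L := by rw [hLθ]; ring
        _ ≤ b2 * (c * δ / 2) * E * L := mul_le_mul_of_nonneg_right c3 hL0.le
        _ = b2 * (c * δ / 2) * L * E := by ring
    have h9 : b1 * L ≤ b1 * L ^ θ := mul_le_mul_of_nonneg_left hLge hb1.le
    linarith
  · -- δ > 1
    obtain ⟨l0b, hl0b1, hl0b⟩ := aux_exp_poly (c / 2) (2 * (b1 + 1) / (b2 * c)) δ (θ - 1)
      (by linarith) (by positivity) hδ
    refine ⟨l0b, hl0b1, fun x y hy hxy hL => ?_⟩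
    set L := x - y with hLdef
    have hL1 : (1:ℝ) ≤ L := le_trans hl0b1 hL.le
    have hL0 : (0:ℝ) < L := lt_of_lt_of_le one_pos hL1
    have hx0 : 0 < x := lt_of_le_of_lt hy hxy
    have hxL : L ≤ x := by rw [hLdef]; linarith
    have hrmono : y ^ δ ≤ x ^ δ := Real.rpow_le_rpow hy hxy.le hδ.le
    have hmono : c * y ^ δ ≤ c * x ^ δ := mul_le_mul_of_nonneg_left hrmono hc.le
    have hyδ0 : 0 ≤ c * y ^ δ := by positivity
    have step1 : (c * x ^ δ - c * y ^ δ) / 2 * Real.exp (c * x ^ δ / 2)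
        ≤ Real.exp (c * x ^ δ) - Real.exp (c * y ^ δ) := aux_exp_sub_exp hyδ0 hmono
    have step2 : L ^ δ ≤ x ^ δ - y ^ δ := by
      have h6 := aux_rpow_superadd hy hL0.le hδ1.le
      have hx : y + L = x := by rw [hLdef]; ring
      rw [hx] at h6
      linarith
    have hLx : L ^ δ ≤ x ^ δ := Real.rpow_le_rpow hL0.le hxL hδ.le
    have hexpL : Real.exp (c / 2 * L ^ δ) ≤ Real.exp (c * x ^ δ / 2) := by
      apply Real.exp_le_exp.mpr
      have := mul_le_mul_of_nonneg_left hLx (by positivity : (0:ℝ) ≤ c / 2)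
      linarith
    have hpolyL : 2 * (b1 + 1) / (b2 * c) * L ^ (θ - 1) ≤ Real.exp (c / 2 * L ^ δ) :=
      hl0b L hL.le
    have hLδL : L ≤ L ^ δ := by
      nth_rewrite 1 [← Real.rpow_one L]
      exact Real.rpow_le_rpow_of_exponent_le hL1 hδ1.le
    have hLθ : L ^ θ = L * L ^ (θ - 1) := by
      rw [show θ = 1 + (θ - 1) by ring, Real.rpow_add hL0, Real.rpow_one]
      ring_nf
    have hLθ1pos : 0 < L ^ (θ - 1) := Real.rpow_pos_of_pos hL0 _
    have hLge : L ≤ L ^ θ := by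
      nth_rewrite 1 [← Real.rpow_one L]
      exact Real.rpow_le_rpow_of_exponent_le hL1 (by linarith)
    set E := Real.exp (c * x ^ δ / 2) with hE
    have e1 : 0 < E := Real.exp_pos _
    have main : (b1 + 1) * L ^ θ ≤ b2 * (Real.exp (c * x ^ δ) - Real.exp (c * y ^ δ)) := by
      have c1 : b2 * ((c * x ^ δ - c * y ^ δ) / 2 * E)
          ≤ b2 * (Real.exp (c * x ^ δ) - Real.exp (c * y ^ δ)) :=
        mul_le_mul_of_nonneg_left step1 hb2.le
      refine le_trans ?_ c1
      have c3 : (b1 + 1) * L ^ (θ - 1) ≤ b2 * (c / 2) * E := by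
        have h7 : 0 < b2 * c := by positivity
        have h8 := le_trans hpolyL hexpL
        rw [div_mul_eq_mul_div, div_le_iff₀ h7] at h8
        linarith
      have t1 : c * L ≤ c * x ^ δ - c * y ^ δ := by
        have h6 : L ≤ x ^ δ - y ^ δ := le_trans hLδL step2
        have := mul_le_mul_of_nonneg_left h6 hc.le
        linarith
      have c4 : (b1 + 1) * L ^ θ ≤ b2 * (c / 2) * E * L := by
        calc (b1 + 1) * L ^ θ = (b1 + 1) * L ^ (θ - 1) * L := by rw [hLθ]; ring
          _ ≤ b2 * (c / 2) * E * L := mul_le_mul_of_nonneg_right c3 hL0.le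
      refine le_trans c4 ?_
      calc b2 * (c / 2) * E * L = (b2 * E / 2) * (c * L) := by ring
        _ ≤ (b2 * E / 2) * (c * x ^ δ - c * y ^ δ) :=
            mul_le_mul_of_nonneg_left t1 (by positivity)
        _ = b2 * ((c * x ^ δ - c * y ^ δ) / 2 * E) := by ring
    have h9 : b1 * L ≤ b1 * L ^ θ := mul_le_mul_of_nonneg_left hLge hb1.le
    linarith

theorem stmt_16
    (b1 b2 c δ θ : ℝ) (hb1 : 0 < b1) (hb2 : 0 < b2) (hc : 0 < c) (hδ : 0 < δ)
    (hθ : 1 < θ) :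
    ∃ l0 > (0:ℝ), ∃ k > (0:ℝ), ∀ x y : ℝ, 0 ≤ y → y < x → l0 < x - y →
      (b1 * x - b2 * Real.exp (c * x ^ δ)) - (b1 * y - b2 * Real.exp (c * y ^ δ))
        ≤ -k * (x - y) ^ θ := by
  obtain ⟨l0, hl01, hl0⟩ := aux_key b1 b2 c δ θ hb1 hb2 hc hδ hθ
  refine ⟨l0, lt_of_lt_of_le one_pos hl01, 1, one_pos, fun x y hy hxy hL => ?_⟩
  have h := hl0 x y hy hxy hL
  linarith
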